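/- (Theorem 1) Let N ≥ 3 be odd and φ ∈ ℝ^N. A stationary point θ (with θ_N = 0) of F_φ is a local minimum if and only if cos s_k > 0 for all k = 1,…,N; in terms of the classification of stationary points, this holds if and only if q_k = 0 for all k = 1,…,N−1 and cos s_N > 0. -/

import Mathlib

open Real Filter

/-- The variable `s k = φ k + θ (k+1) - θ k` (indices cyclic mod `N`,
0-based; paper index `k` corresponds to `k-1` here, so `s_N` is `sVar` at `lastIdx`). -/
noncomputable def sVar (N : ℕ) (hN : 0 < N) (φ θ : Fin N → ℝ) (k : Fin N) : ℝ :=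
  φ k + θ ⟨((k : ℕ) + 1) % N, Nat.mod_lt _ hN⟩ - θ k

/-- The lattice Landau gauge functional / random phase XY Hamiltonian
`F_φ(θ) = Σ_k (1 - cos(φ_k + θ_{k+1} - θ_k))` with periodic boundary conditions. -/
noncomputable def Fxy (N : ℕ) (hN : 0 < N) (φ θ : Fin N → ℝ) : ℝ :=
  ∑ k : Fin N, (1 - Real.cos (sVar N hN φ θ k))

/-- The index of the fixed site (paper site `N`). -/
def lastIdx (N : ℕ) (hN : 0 < N) : Fin N :=
  ⟨N - 1, Nat.sub_lt hN Nat.one_pos⟩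

/-- `θ` is a stationary point of `F_φ` regarded as a function of the free
coordinates `θ_1, …, θ_{N-1}` (0-based: coordinates `k` with `k < N-1`),
with `θ` at `lastIdx` held fixed: all partial derivatives vanish. -/
noncomputable def IsStationaryPt (N : ℕ) (hN : 0 < N) (φ θ : Fin N → ℝ) : Prop :=
  ∀ k : Fin N, (k : ℕ) < N - 1 →
    deriv (fun t : ℝ => Fxy N hN φ (Function.update θ k t)) (θ k) = 0

/-- The `(N-1) × (N-1)` tridiagonal matrix with entries
`δ_{ij}(c_{i-1} + c_i) - δ_{i-1,j} c_{i-1} - δ_{i+1,j} c_i`, where indices are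
0-based (paper index `i` ↦ `i-1`) and `c_0 := c_N` (cyclic predecessor). -/
noncomputable def hessC (N : ℕ) (hN : 0 < N) (c : Fin N → ℝ) :
    Matrix (Fin (N - 1)) (Fin (N - 1)) ℝ :=
  Matrix.of fun i j =>
    (if i = j then
        c ⟨((i : ℕ) + (N - 1)) % N, Nat.mod_lt _ hN⟩ +
          c ⟨(i : ℕ), lt_of_lt_of_le i.isLt (Nat.sub_le N 1)⟩
      else 0)
    - (if (i : ℕ) = (j : ℕ) + 1 then c ⟨((i : ℕ) + (N - 1)) % N, Nat.mod_lt _ hN⟩ else 0)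
    - (if (j : ℕ) = (i : ℕ) + 1 then c ⟨(i : ℕ), lt_of_lt_of_le i.isLt (Nat.sub_le N 1)⟩ else 0)

/-- The Hessian of `F_φ` (with the last coordinate fixed) at a configuration `θ`. -/
noncomputable def hessAt (N : ℕ) (hN : 0 < N) (φ θ : Fin N → ℝ) :
    Matrix (Fin (N - 1)) (Fin (N - 1)) ℝ :=
  hessC N hN fun k => Real.cos (sVar N hN φ θ k)

/-- `F_φ` as a function of the free coordinates only: the coordinate at
`lastIdx` is overwritten by `0`. -/
noncomputable def FxyFixed (N : ℕ) (hN : 0 < N) (φ : Fin N → ℝ) (η : Fin N → ℝ) : ℝ :=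
  Fxy N hN φ (Function.update η (lastIdx N hN) 0)

/-- The value `σ = (Φ + 2πl - π Σ_{k=1}^{N-1} q_k) / (1 + Σ_{k=1}^{N-1} (-1)^{q_k})`. -/
noncomputable def sigmaVal (N : ℕ) (hN : 0 < N) (φ : Fin N → ℝ) (q : Fin N → ℕ) (l : ℤ) : ℝ :=
  ((∑ k, φ k) + 2 * Real.pi * (l : ℝ)
      - Real.pi * ∑ k ∈ Finset.univ.erase (lastIdx N hN), (q k : ℝ)) /
    (1 + ∑ k ∈ Finset.univ.erase (lastIdx N hN), (-1 : ℝ) ^ (q k))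

lemma mod_cases (N x : ℕ) (h : x < 2 * N) : x % N = if x < N then x else x - N := by
  split
  · exact Nat.mod_eq_of_lt ‹_›
  · rw [Nat.mod_eq_sub_mod (by omega)]; exact Nat.mod_eq_of_lt (by omega)

/-- cyclic successor -/
def sIdx (N : ℕ) (hN : 0 < N) (k : Fin N) : Fin N := ⟨((k : ℕ) + 1) % N, Nat.mod_lt _ hN⟩

lemma sVar_def (N : ℕ) (hN : 0 < N) (φ θ : Fin N → ℝ) (k : Fin N) :
    sVar N hN φ θ k = φ k + θ (sIdx N hN k) - θ k := rfl

lemma sIdx_val (N : ℕ) (hN : 0 < N) (k : Fin N) :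
    (sIdx N hN k : ℕ) = if (k : ℕ) + 1 < N then (k : ℕ) + 1 else 0 := by
  have hk := k.isLt
  show ((k : ℕ) + 1) % N = _
  rw [mod_cases N _ (by omega)]
  split <;> omega

lemma sIdx_bijective (N : ℕ) (hN : 0 < N) : Function.Bijective (sIdx N hN) := by
  rw [Fintype.bijective_iff_injective_and_card]
  refine ⟨fun a b hab => ?_, rfl⟩
  have ha := a.isLt; have hb := b.isLt
  have h : (sIdx N hN a : ℕ) = (sIdx N hN b : ℕ) := congrArg Fin.val hab
  rw [sIdx_val, sIdx_val] at h
  ext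
  split at h <;> split at h <;> omega

lemma sum_comp_sIdx (N : ℕ) (hN : 0 < N) (f : Fin N → ℝ) :
    ∑ k, f (sIdx N hN k) = ∑ k, f k :=
  Function.Bijective.sum_comp (sIdx_bijective N hN) f

lemma sum_delta_zero (N : ℕ) (hN : 0 < N) (ψ : Fin N → ℝ) :
    ∑ k, (ψ (sIdx N hN k) - ψ k) = 0 := by
  rw [Finset.sum_sub_distrib, sum_comp_sIdx, sub_self]

/-- cyclic predecessor -/
def pIdx (N : ℕ) (hN : 0 < N) (k : Fin N) : Fin N :=
  ⟨((k : ℕ) + (N - 1)) % N, Nat.mod_lt _ hN⟩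

lemma pIdx_val (N : ℕ) (hN : 0 < N) (k : Fin N) :
    (pIdx N hN k : ℕ) = if (k : ℕ) = 0 then N - 1 else (k : ℕ) - 1 := by
  have hk := k.isLt
  show ((k : ℕ) + (N - 1)) % N = _
  rw [mod_cases N _ (by omega)]
  split <;> split <;> omega

lemma sIdx_pIdx (N : ℕ) (hN : 0 < N) (k : Fin N) : sIdx N hN (pIdx N hN k) = k := by
  have hk := k.isLt
  ext
  rw [sIdx_val, pIdx_val]
  split <;> split <;> omega

lemma sIdx_eq_iff (N : ℕ) (hN : 0 < N) (j k : Fin N) :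
    sIdx N hN j = k ↔ j = pIdx N hN k := by
  constructor
  · rintro rfl
    have hj := j.isLt
    ext; rw [pIdx_val, sIdx_val]; split <;> split <;> omega
  · rintro rfl; exact sIdx_pIdx N hN k
lemma hasDerivAt_ite (P : Prop) [Decidable P] (c x : ℝ) :
    HasDerivAt (fun t : ℝ => if P then t else c) (if P then 1 else 0) x := by
  split
  · exact hasDerivAt_id x
  · exact hasDerivAt_const x c

lemma hasDerivAt_Fxy (N : ℕ) (hN : 0 < N) (φ θ : Fin N → ℝ) (k : Fin N) :
    HasDerivAt (fun t : ℝ => Fxy N hN φ (Function.update θ k t))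
      (Real.sin (sVar N hN φ θ (pIdx N hN k)) - Real.sin (sVar N hN φ θ k)) (θ k) := by
  have key : ∀ j : Fin N, HasDerivAt
      (fun t : ℝ => 1 - Real.cos (sVar N hN φ (Function.update θ k t) j))
      (Real.sin (sVar N hN φ θ j) *
        ((if sIdx N hN j = k then 1 else 0) - (if j = k then 1 else 0))) (θ k) := by
    intro j
    have harg : ∀ t : ℝ, sVar N hN φ (Function.update θ k t) j =
        φ j + (if sIdx N hN j = k then t else θ (sIdx N hN j)) - (if j = k then t else θ j) := by
      intro t
      rw [sVar_def]
      congr 1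
      · congr 1
        exact Function.update_apply θ k t (sIdx N hN j)
      · exact Function.update_apply θ k t j
    have hval : (φ j + (if sIdx N hN j = k then θ k else θ (sIdx N hN j)) -
        (if j = k then θ k else θ j)) = sVar N hN φ θ j := by
      rw [sVar_def]; split_ifs with h1 h2 <;> simp_all
    have hinner : HasDerivAt (fun t : ℝ =>
        φ j + (if sIdx N hN j = k then t else θ (sIdx N hN j)) - (if j = k then t else θ j))
        ((if sIdx N hN j = k then 1 else 0) - (if j = k then 1 else 0)) (θ k) :=
      (((hasDerivAt_ite _ _ _)).const_add (φ j)).sub (hasDerivAt_ite _ _ _)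
    have h2 := (hinner.cos).const_sub 1
    rw [hval] at h2
    have heq : (fun t : ℝ => 1 - Real.cos (sVar N hN φ (Function.update θ k t) j)) =
        (fun t : ℝ => 1 - Real.cos
          (φ j + (if sIdx N hN j = k then t else θ (sIdx N hN j)) - (if j = k then t else θ j))) :=
      funext fun t => by rw [harg t]
    rw [heq]
    exact h2.congr_deriv (by ring)
  have hsum := HasDerivAt.fun_sum (fun j (_ : j ∈ Finset.univ) => key j)
  have e1 : ∑ j : Fin N, Real.sin (sVar N hN φ θ j) *
      ((if sIdx N hN j = k then 1 else 0) - (if j = k then 1 else 0)) =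
      Real.sin (sVar N hN φ θ (pIdx N hN k)) - Real.sin (sVar N hN φ θ k) := by
    have step : ∀ j : Fin N, Real.sin (sVar N hN φ θ j) *
        ((if sIdx N hN j = k then 1 else 0) - (if j = k then 1 else 0)) =
        (if j = pIdx N hN k then Real.sin (sVar N hN φ θ j) else 0) -
          (if j = k then Real.sin (sVar N hN φ θ j) else 0) := by
      intro j
      rw [if_congr (sIdx_eq_iff N hN j k) rfl rfl]
      split_ifs <;> ring
    rw [Finset.sum_congr rfl (fun j _ => step j), Finset.sum_sub_distrib,
      Finset.sum_ite_eq', Finset.sum_ite_eq']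
    simp
  rw [e1] at hsum
  exact hsum

lemma stat_sin (N : ℕ) (hN : 0 < N) (φ θ : Fin N → ℝ)
    (hstat : IsStationaryPt N hN φ θ) (k : Fin N) :
    Real.sin (sVar N hN φ θ k) = Real.sin (sVar N hN φ θ (lastIdx N hN)) := by
  have main : ∀ k : Fin N, (k : ℕ) < N - 1 →
      Real.sin (sVar N hN φ θ (pIdx N hN k)) = Real.sin (sVar N hN φ θ k) := by
    intro k hk
    have h := hstat k hk
    rw [(hasDerivAt_Fxy N hN φ θ k).deriv] at h
    linarith
  have aux : ∀ n : ℕ, ∀ h : n < N, Real.sin (sVar N hN φ θ ⟨n, h⟩) =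
      Real.sin (sVar N hN φ θ (lastIdx N hN)) := by
    intro n
    induction n with
    | zero =>
      intro h
      by_cases hN1 : N = 1
      · subst hN1; rfl
      have h0 := main ⟨0, h⟩ (by simp; omega)
      have : pIdx N hN ⟨0, h⟩ = lastIdx N hN := by
        ext; rw [pIdx_val]; simp [lastIdx]
      rw [this] at h0
      exact h0.symm
    | succ n ih =>
      intro h
      by_cases hlt : n + 1 < N - 1
      · have h1 := main ⟨n + 1, h⟩ hlt
        have : pIdx N hN ⟨n + 1, h⟩ = ⟨n, by omega⟩ := by
          ext; rw [pIdx_val]; simp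
        rw [this] at h1
        rw [← h1]
        exact ih _
      · have : (⟨n + 1, h⟩ : Fin N) = lastIdx N hN := by
          ext; simp [lastIdx]; omega
        rw [this]
  have hk := k.isLt
  have := aux (k : ℕ) hk
  simpa using this
lemma one_sub_cos_lower {x : ℝ} (hx : |x| ≤ 1) : 43 / 96 * x ^ 2 ≤ 1 - Real.cos x := by
  have h := Real.cos_bound hx
  have h2 : x ^ 2 ≤ 1 := by
    have := abs_nonneg x
    nlinarith [sq_abs x]
  rw [abs_le] at h
  nlinarith [sq_abs x, sq_nonneg x, sq_nonneg (x ^ 2)]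

lemma one_sub_cos_upper {x : ℝ} (hx : |x| ≤ 1) : 1 - Real.cos x ≤ 53 / 96 * x ^ 2 := by
  have h := Real.cos_bound hx
  have h2 : x ^ 2 ≤ 1 := by
    have := abs_nonneg x
    nlinarith [sq_abs x]
  rw [abs_le] at h
  nlinarith [sq_abs x, sq_nonneg x, sq_nonneg (x ^ 2)]

lemma sin_sub_self_bound {x : ℝ} (hx : |x| ≤ 1) : |Real.sin x - x| ≤ 21 / 96 * |x| ^ 3 := by
  have h := Real.sin_bound hx
  have habs := abs_nonneg x
  have h4 : |x| ^ 4 ≤ |x| ^ 3 := by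
    calc |x| ^ 4 = |x| ^ 3 * |x| := by ring
      _ ≤ |x| ^ 3 * 1 := mul_le_mul_of_nonneg_left hx (pow_nonneg habs 3)
      _ = |x| ^ 3 := mul_one _
  have h3 : |x ^ 3 / 6| = |x| ^ 3 / 6 := by
    rw [abs_div, abs_pow]; norm_num
  calc |Real.sin x - x| = |(Real.sin x - (x - x ^ 3 / 6)) + (- x ^ 3 / 6)| := by ring_nf
    _ ≤ |Real.sin x - (x - x ^ 3 / 6)| + |(- x ^ 3 / 6)| := abs_add_le _ _
    _ ≤ |x| ^ 4 * (5 / 96) + |x| ^ 3 / 6 := by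
        rw [show (-x^3/6 : ℝ) = x^3/6 * (-1) by ring, abs_mul]
        simp only [abs_neg, abs_one, mul_one]
        rw [h3]
        nlinarith [pow_le_pow_of_le_one habs hx (show 4 ≤ 5 by norm_num), pow_nonneg habs 4]
    _ ≤ 21 / 96 * |x| ^ 3 := by nlinarith

/-- The basic expansion of the difference of energies. -/
lemma Fxy_diff (N : ℕ) (hN : 0 < N) (φ θ ψ : Fin N → ℝ) :
    Fxy N hN φ ψ - Fxy N hN φ θ =
      ∑ k, (Real.cos (sVar N hN φ θ k) - Real.cos (sVar N hN φ θ k +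
        ((ψ (sIdx N hN k) - θ (sIdx N hN k)) - (ψ k - θ k)))) := by
  unfold Fxy
  rw [← Finset.sum_sub_distrib]
  refine Finset.sum_congr rfl fun k _ => ?_
  have : sVar N hN φ ψ k = sVar N hN φ θ k +
      ((ψ (sIdx N hN k) - θ (sIdx N hN k)) - (ψ k - θ k)) := by
    rw [sVar_def, sVar_def]; ring
  rw [this]; ring

lemma cos_diff_expand (s δ S : ℝ) (hS : Real.sin s = S) :
    Real.cos s - Real.cos (s + δ) =
      Real.cos s * (1 - Real.cos δ) + S * Real.sin δ := by
  rw [Real.cos_add, ← hS]; ring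
lemma pointwise_nonneg (c δ S : ℝ) (hc : 0 < c) (h1 : |δ| ≤ 1) (h2 : |δ| ≤ c) (hS : |S| ≤ 1) :
    0 ≤ c * (1 - Real.cos δ) + S * (Real.sin δ - δ) := by
  have hl := one_sub_cos_lower h1
  have hs := sin_sub_self_bound h1
  have h3 : |δ| ^ 3 = |δ| * δ ^ 2 := by
    rw [pow_succ, sq_abs, mul_comm]
  have e1 : -(21 / 96 * (c * δ ^ 2)) ≤ S * (Real.sin δ - δ) := by
    have habs : |S * (Real.sin δ - δ)| ≤ 21 / 96 * (c * δ ^ 2) := by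
      rw [abs_mul]
      calc |S| * |Real.sin δ - δ| ≤ 1 * (21 / 96 * |δ| ^ 3) :=
            mul_le_mul hS hs (abs_nonneg _) zero_le_one
        _ = 21 / 96 * (|δ| * δ ^ 2) := by rw [h3]; ring
        _ ≤ 21 / 96 * (c * δ ^ 2) := by nlinarith [sq_nonneg δ]
    linarith [neg_abs_le (S * (Real.sin δ - δ))]
  have e2 : c * (43 / 96 * δ ^ 2) ≤ c * (1 - Real.cos δ) :=
    mul_le_mul_of_nonneg_left hl hc.le
  nlinarith [mul_nonneg hc.le (sq_nonneg δ)]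

lemma isLocalMin_of_cos_pos (N : ℕ) (hN : 0 < N) (φ θ : Fin N → ℝ)
    (hlast : θ (lastIdx N hN) = 0) (hstat : IsStationaryPt N hN φ θ)
    (hpos : ∀ k : Fin N, 0 < Real.cos (sVar N hN φ θ k)) :
    IsLocalMin (FxyFixed N hN φ) θ := by
  have hSabs : |Real.sin (sVar N hN φ θ (lastIdx N hN))| ≤ 1 := Real.abs_sin_le_one _
  set S := Real.sin (sVar N hN φ θ (lastIdx N hN)) with hSdef
  obtain ⟨k0, -, hk0⟩ := Finset.exists_min_image Finset.univ
    (fun k => Real.cos (sVar N hN φ θ k)) ⟨lastIdx N hN, Finset.mem_univ _⟩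
  set cmin := Real.cos (sVar N hN φ θ k0) with hcdef
  have hcmin : 0 < cmin := hpos k0
  have hle : ∀ k, cmin ≤ Real.cos (sVar N hN φ θ k) := fun k => hk0 k (Finset.mem_univ k)
  set ε := min cmin 1 / 2 with hεdef
  have hε : 0 < ε := by positivity
  refine Metric.eventually_nhds_iff.mpr ⟨ε, hε, fun η hη => ?_⟩
  have hθfix : Function.update θ (lastIdx N hN) 0 = θ := by
    rw [← hlast, Function.update_eq_self]
  have hFθ : FxyFixed N hN φ θ = Fxy N hN φ θ := by rw [FxyFixed, hθfix]
  set ψ := Function.update η (lastIdx N hN) 0 with hψdef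
  have hco : ∀ j, |ψ j - θ j| < ε := by
    intro j
    by_cases hj : j = lastIdx N hN
    · subst hj; simp [hψdef, Function.update_self, hlast, hε]
    · rw [hψdef, Function.update_of_ne hj]
      calc |η j - θ j| = dist (η j) (θ j) := (Real.dist_eq _ _).symm
        _ ≤ dist η θ := dist_le_pi_dist η θ j
        _ < ε := hη
  set δ : Fin N → ℝ := fun k => (ψ (sIdx N hN k) - θ (sIdx N hN k)) - (ψ k - θ k) with hδdef
  have hδb : ∀ k, |δ k| ≤ 2 * ε := by
    intro k
    calc |δ k| ≤ |ψ (sIdx N hN k) - θ (sIdx N hN k)| + |ψ k - θ k| := abs_sub _ _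
      _ ≤ 2 * ε := by linarith [(hco (sIdx N hN k)).le, (hco k).le]
  have h2ε1 : 2 * ε ≤ 1 := by rw [hεdef]; have := min_le_right cmin 1; linarith
  have h2εc : 2 * ε ≤ cmin := by rw [hεdef]; have := min_le_left cmin 1; linarith
  show FxyFixed N hN φ θ ≤ FxyFixed N hN φ η
  rw [hFθ, show FxyFixed N hN φ η = Fxy N hN φ ψ from rfl]
  have hdiff := Fxy_diff N hN φ θ ψ
  have key : ∀ k : Fin N, 0 ≤ Real.cos (sVar N hN φ θ k) * (1 - Real.cos (δ k)) +
      S * (Real.sin (δ k) - δ k) := by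
    intro k
    exact pointwise_nonneg _ _ _ (hpos k) (le_trans (hδb k) h2ε1)
      (le_trans (hδb k) (le_trans h2εc (hle k))) hSabs
  have step : ∀ k : Fin N, Real.cos (sVar N hN φ θ k) - Real.cos (sVar N hN φ θ k + δ k) =
      (Real.cos (sVar N hN φ θ k) * (1 - Real.cos (δ k)) + S * (Real.sin (δ k) - δ k))
        + S * δ k := by
    intro k
    rw [cos_diff_expand _ _ _ (stat_sin N hN φ θ hstat k)]
    ring
  have hsum0 : ∑ k, δ k = 0 := sum_delta_zero N hN (fun j => ψ j - θ j)
  have : Fxy N hN φ ψ - Fxy N hN φ θ =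
      ∑ k, ((Real.cos (sVar N hN φ θ k) * (1 - Real.cos (δ k)) +
        S * (Real.sin (δ k) - δ k)) + S * δ k) := by
    rw [hdiff]
    exact Finset.sum_congr rfl fun k _ => step k
  rw [Finset.sum_add_distrib, ← Finset.mul_sum, hsum0, mul_zero, add_zero] at this
  have hnn : 0 ≤ ∑ k, (Real.cos (sVar N hN φ θ k) * (1 - Real.cos (δ k)) +
      S * (Real.sin (δ k) - δ k)) := Finset.sum_nonneg fun k _ => key k
  linarith
lemma curve_diff (N : ℕ) (hN : 0 < N) (φ θ : Fin N → ℝ) (hstat : IsStationaryPt N hN φ θ)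
    (a : Fin N → ℝ) (t : ℝ) :
    Fxy N hN φ (fun i => θ i + t * a i) - Fxy N hN φ θ =
      ∑ k, (Real.cos (sVar N hN φ θ k) * (1 - Real.cos (t * (a (sIdx N hN k) - a k))) +
        Real.sin (sVar N hN φ θ (lastIdx N hN)) * Real.sin (t * (a (sIdx N hN k) - a k))) := by
  rw [Fxy_diff N hN φ θ (fun i => θ i + t * a i)]
  refine Finset.sum_congr rfl fun k _ => ?_
  have harg : (θ (sIdx N hN k) + t * a (sIdx N hN k) - θ (sIdx N hN k)) -
      ((θ k + t * a k) - θ k) = t * (a (sIdx N hN k) - a k) := by ring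
  show Real.cos (sVar N hN φ θ k) -
      Real.cos (sVar N hN φ θ k + ((θ (sIdx N hN k) + t * a (sIdx N hN k) - θ (sIdx N hN k)) -
        ((θ k + t * a k) - θ k))) = _
  rw [harg, cos_diff_expand _ _ _ (stat_sin N hN φ θ hstat k)]

lemma not_localMin_of_curve (N : ℕ) (hN : 0 < N) (φ θ : Fin N → ℝ)
    (hlast : θ (lastIdx N hN) = 0) (a : Fin N → ℝ) (ha : a (lastIdx N hN) = 0)
    (hdec : ∀ ε : ℝ, 0 < ε → ∃ t : ℝ, |t| < ε ∧
      Fxy N hN φ (fun i => θ i + t * a i) < Fxy N hN φ θ) :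
    ¬ IsLocalMin (FxyFixed N hN φ) θ := by
  intro hmin
  set γ : ℝ → (Fin N → ℝ) := fun t i => θ i + t * a i with hγ
  have hγ0 : γ 0 = θ := by funext i; simp [hγ]
  have hγcont : ContinuousAt γ 0 := by
    apply Continuous.continuousAt
    exact continuous_pi fun i => continuous_const.add (continuous_id.mul continuous_const)
  have hmin' : IsLocalMin (FxyFixed N hN φ ∘ γ) 0 := by
    refine IsLocalMin.comp_continuous ?_ hγcont
    rw [hγ0]; exact hmin
  obtain ⟨ε, hε, hball⟩ := Metric.eventually_nhds_iff.mp hmin'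
  obtain ⟨t, ht, hlt⟩ := hdec ε hε
  have hdist : dist t 0 < ε := by rwa [Real.dist_eq, sub_zero]
  have hb := hball hdist
  have hθe : FxyFixed N hN φ θ = Fxy N hN φ θ := by
    rw [FxyFixed, show Function.update θ (lastIdx N hN) 0 = θ from by
      rw [← hlast, Function.update_eq_self]]
  have hfix : ∀ s : ℝ, FxyFixed N hN φ (γ s) = Fxy N hN φ (γ s) := by
    intro s
    have : γ s (lastIdx N hN) = 0 := by simp [hγ, hlast, ha]
    rw [FxyFixed, ← this, Function.update_eq_self]
  simp only [Function.comp_apply, hfix, hγ0, hθe] at hb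
  exact absurd hb (not_le.mpr hlt)

lemma caseA_dec (N : ℕ) (hN3 : 3 ≤ N) (φ θ : Fin N → ℝ)
    (hstat : IsStationaryPt N (Nat.lt_of_lt_of_le (by norm_num) hN3) φ θ)
    (hcos0 : ∀ k : Fin N, Real.cos (sVar N (Nat.lt_of_lt_of_le (by norm_num) hN3) φ θ k) = 0) :
    ∀ ε : ℝ, 0 < ε → ∃ t : ℝ, |t| < ε ∧
      Fxy N (Nat.lt_of_lt_of_le (by norm_num) hN3) φ (fun i => θ i +
        t * (if (i : ℕ) = 0 then 2 else if (i : ℕ) = 1 then 1 else 0)) < Fxy N (Nat.lt_of_lt_of_le (by norm_num) hN3) φ θ := by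
  have hN : 0 < N := by omega
  intro ε hε
  set a : Fin N → ℝ := fun i => if (i : ℕ) = 0 then 2 else if (i : ℕ) = 1 then 1 else 0 with hadef
  set S := Real.sin (sVar N hN φ θ (lastIdx N hN)) with hSdef
  have hS2 : S ^ 2 = 1 := by
    have := Real.sin_sq_add_cos_sq (sVar N hN φ θ (lastIdx N hN))
    rw [hcos0 (lastIdx N hN)] at this
    nlinarith
  have hS : S = 1 ∨ S = -1 := by
    rcases mul_eq_zero.mp (show (S - 1) * (S + 1) = 0 by nlinarith) with h | h
    · left; linarith
    · right; linarith
  -- the three special indices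
  set i0 : Fin N := ⟨0, by omega⟩ with hi0
  set i1 : Fin N := ⟨1, by omega⟩ with hi1
  set iL : Fin N := lastIdx N hN with hiL
  have hiLv : (iL : ℕ) = N - 1 := rfl
  have hd : ∀ k : Fin N, a (sIdx N hN k) - a k =
      if k = i0 then -1 else if k = i1 then -1 else if k = iL then 2 else 0 := by
    intro k
    have hk := k.isLt
    have hsv := sIdx_val N hN k
    have e0 : (k = i0) ↔ ((k : ℕ) = 0) := by
      constructor; · rintro rfl; rfl
      · intro h; exact Fin.ext h
    have e1 : (k = i1) ↔ ((k : ℕ) = 1) := by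
      constructor; · rintro rfl; rfl
      · intro h; exact Fin.ext h
    have eL : (k = iL) ↔ ((k : ℕ) = N - 1) := by
      constructor; · rintro rfl; rfl
      · intro h; exact Fin.ext h
    rw [hadef]
    simp only [e0, e1, eL]
    rw [show (sIdx N hN k : ℕ) = if (k : ℕ) + 1 < N then (k : ℕ) + 1 else 0 from hsv]
    split_ifs <;>
      first
        | exact (‹False›).elim
        | omega
        | norm_num
  have hdiff : ∀ t : ℝ, Fxy N hN φ (fun i => θ i + t * a i) - Fxy N hN φ θ =
      S * (Real.sin (t * 2) + 2 * Real.sin (t * -1)) := by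
    intro t
    rw [curve_diff N hN φ θ hstat a t]
    have hterm : ∀ k : Fin N,
        Real.cos (sVar N hN φ θ k) * (1 - Real.cos (t * (a (sIdx N hN k) - a k))) +
          S * Real.sin (t * (a (sIdx N hN k) - a k)) =
        S * Real.sin (t * (a (sIdx N hN k) - a k)) := by
      intro k; rw [hcos0 k]; ring
    rw [Finset.sum_congr rfl fun k _ => hterm k, ← Finset.mul_sum]
    congr 1
    have hne01 : i0 ≠ i1 := by intro h; have := congrArg Fin.val h; simp [hi0, hi1] at this
    have hne0L : i0 ≠ iL := by
      intro h; have := congrArg Fin.val h; rw [hiLv] at this; simp [hi0] at this; omega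
    have hne1L : i1 ≠ iL := by
      intro h; have := congrArg Fin.val h; rw [hiLv] at this; simp [hi1] at this; omega
    have hsub : ∑ k : Fin N, Real.sin (t * (a (sIdx N hN k) - a k)) =
        ∑ k ∈ ({i0, i1, iL} : Finset (Fin N)), Real.sin (t * (a (sIdx N hN k) - a k)) := by
      refine (Finset.sum_subset (Finset.subset_univ _) fun x _ hx => ?_).symm
      simp only [Finset.mem_insert, Finset.mem_singleton, not_or] at hx
      obtain ⟨hx0, hx1, hxL⟩ := hx
      rw [hd x, if_neg hx0, if_neg hx1, if_neg hxL]
      simp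
    rw [hsub]
    rw [show ({i0, i1, iL} : Finset (Fin N)) = insert i0 (insert i1 {iL}) from rfl]
    rw [Finset.sum_insert (by simp [hne01, hne0L]), Finset.sum_insert (by simp [hne1L]),
      Finset.sum_singleton]
    rw [hd i0, hd i1, hd iL, if_pos rfl, if_neg (Ne.symm hne01), if_pos rfl,
      if_neg (Ne.symm hne0L), if_neg (Ne.symm hne1L), if_pos rfl]
    ring
  set u := min (ε / 2) 1 with hu_def
  have hu : 0 < u := lt_min (by linarith) one_pos
  have hu1 : u ≤ 1 := min_le_right _ _
  have huε : u < ε := lt_of_le_of_lt (min_le_left _ _) (by linarith)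
  have hsin : 0 < Real.sin u :=
    Real.sin_pos_of_pos_of_lt_pi hu (by linarith [Real.pi_gt_three])
  have hcos : Real.cos u < 1 := by
    have := one_sub_cos_lower (x := u) (by rw [abs_of_pos hu]; exact hu1)
    nlinarith
  rcases hS with hS1 | hS1
  · refine ⟨u, by rw [abs_of_pos hu]; exact huε, ?_⟩
    have hval : S * (Real.sin (u * 2) + 2 * Real.sin (u * -1)) =
        2 * Real.sin u * (Real.cos u - 1) := by
      rw [hS1, show u * 2 = 2 * u by ring, Real.sin_two_mul,
        show u * -1 = -u by ring, Real.sin_neg]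
      ring
    have h1 := hdiff u
    rw [hval] at h1
    nlinarith
  · refine ⟨-u, by rw [abs_neg, abs_of_pos hu]; exact huε, ?_⟩
    have hval : S * (Real.sin (-u * 2) + 2 * Real.sin (-u * -1)) =
        2 * Real.sin u * (Real.cos u - 1) := by
      rw [hS1, show -u * 2 = -(2 * u) by ring, Real.sin_neg, Real.sin_two_mul,
        show -u * -1 = u by ring]
      ring
    have h1 := hdiff (-u)
    rw [hval] at h1
    nlinarith
set_option maxHeartbeats 1000000
lemma caseB_dec (N : ℕ) (hN3 : 3 ≤ N) (φ θ : Fin N → ℝ)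
    (hstat : IsStationaryPt N (Nat.lt_of_lt_of_le (by norm_num) hN3) φ θ) (j : Fin N)
    (hcneg : Real.cos (sVar N (Nat.lt_of_lt_of_le (by norm_num) hN3) φ θ j) < 0)
    (hub : ∀ k, Real.cos (sVar N (Nat.lt_of_lt_of_le (by norm_num) hN3) φ θ k) ≤
      -Real.cos (sVar N (Nat.lt_of_lt_of_le (by norm_num) hN3) φ θ j)) :
    ∃ a : Fin N → ℝ, a (lastIdx N (Nat.lt_of_lt_of_le (by norm_num) hN3)) = 0 ∧
      ∀ ε : ℝ, 0 < ε → ∃ t : ℝ, |t| < ε ∧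
        Fxy N (Nat.lt_of_lt_of_le (by norm_num) hN3) φ (fun i => θ i + t * a i) < Fxy N (Nat.lt_of_lt_of_le (by norm_num) hN3) φ θ := by
  have hN : 0 < N := by omega
  set c := -Real.cos (sVar N hN φ θ j) with hcdef
  have hc : 0 < c := by rw [hcdef]; linarith
  clear_value c
  set off := N - 1 - (j : ℕ) with hoffdef
  set b : Fin N → ℕ := fun i => ((i : ℕ) + off) % N with hbdef
  have hblt : ∀ i, b i < N := fun i => Nat.mod_lt _ hN
  set a : Fin N → ℝ := fun i => ((b (lastIdx N hN) : ℝ)) - ((b i : ℝ)) with hadef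
  have ha : a (lastIdx N hN) = 0 := sub_self _
  have hbj : ∀ k : Fin N, (b k = N - 1 ↔ k = j) := by
    intro k
    have hk := k.isLt
    have hj := j.isLt
    have hoff : off ≤ N - 1 := Nat.sub_le _ _
    have hoff2 : off = N - 1 - (j : ℕ) := rfl
    show ((k : ℕ) + off) % N = N - 1 ↔ k = j
    rw [mod_cases N _ (by omega), Fin.ext_iff]
    split <;> omega
  have hbs : ∀ k : Fin N, b (sIdx N hN k) = (b k + 1) % N := by
    intro k
    show (((k : ℕ) + 1) % N + off) % N = (((k : ℕ) + off) % N + 1) % N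
    rw [Nat.mod_add_mod, Nat.mod_add_mod]
    congr 1
    omega
  have hd : ∀ k : Fin N, a (sIdx N hN k) - a k = if k = j then (N : ℝ) - 1 else -1 := by
    intro k
    have h1 : a (sIdx N hN k) - a k = (b k : ℝ) - (b (sIdx N hN k) : ℝ) := by
      rw [hadef]; ring
    rw [h1, hbs k]
    by_cases hkj : k = j
    · rw [if_pos hkj]
      have : b k = N - 1 := (hbj k).mpr hkj
      rw [this, show N - 1 + 1 = N by omega, Nat.mod_self]
      push_cast [Nat.cast_sub (by omega : 1 ≤ N)]
      ring
    · rw [if_neg hkj]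
      have hne : b k ≠ N - 1 := fun h => hkj ((hbj k).mp h)
      have hlt : b k + 1 < N := by have := hblt k; omega
      rw [Nat.mod_eq_of_lt hlt]
      push_cast
      ring
  refine ⟨a, ha, ?_⟩
  intro ε hε
  have hN4 : (0 : ℝ) < (N : ℝ) ^ 4 := by positivity
  have hNR : (3 : ℝ) ≤ (N : ℝ) := by exact_mod_cast hN3
  set t := min (ε / 2) (min (1 / N) (c / (4 * (N : ℝ) ^ 4))) with htdef
  have ht : 0 < t := by
    apply lt_min (by linarith)
    apply lt_min (by positivity) (by positivity)
  have htε : t < ε := lt_of_le_of_lt (min_le_left _ _) (by linarith)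
  have hNpos : (0 : ℝ) < N := by linarith
  have htN : t * (N : ℝ) ≤ 1 := by
    have h1 : t ≤ 1 / N := le_trans (min_le_right _ _) (min_le_left _ _)
    calc t * (N : ℝ) ≤ (1 / N) * N := mul_le_mul_of_nonneg_right h1 hNpos.le
      _ = 1 := by field_simp
  have htc : t ≤ c / (4 * (N : ℝ) ^ 4) := le_trans (min_le_right _ _) (min_le_right _ _)
  clear_value t
  refine ⟨t, by rw [abs_of_pos ht]; exact htε, ?_⟩
  have hdiffeq := curve_diff N hN φ θ hstat a t
  set S := Real.sin (sVar N hN φ θ (lastIdx N hN)) with hSdef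
  have hSabs : |S| ≤ 1 := Real.abs_sin_le_one _
  -- the pieces
  set f : Fin N → ℝ := fun k =>
    Real.cos (sVar N hN φ θ k) * (1 - Real.cos (t * (a (sIdx N hN k) - a k))) with hfdef
  set g : Fin N → ℝ := fun k => Real.sin (t * (a (sIdx N hN k) - a k)) with hgdef
  have hsplit : ∑ k, (f k + S * g k) = (∑ k, f k) + S * ∑ k, g k := by
    rw [Finset.sum_add_distrib, ← Finset.mul_sum]
  -- bound on |d k|
  have hdabs : ∀ k : Fin N, |a (sIdx N hN k) - a k| ≤ (N : ℝ) := by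
    intro k
    rw [hd k]
    split
    · rw [abs_of_nonneg (by linarith)]; linarith
    · rw [abs_neg, abs_one]; linarith
  have htd1 : ∀ k : Fin N, |t * (a (sIdx N hN k) - a k)| ≤ 1 := by
    intro k
    rw [abs_mul, abs_of_pos ht]
    calc t * |a (sIdx N hN k) - a k| ≤ t * N := mul_le_mul_of_nonneg_left (hdabs k) ht.le
      _ ≤ 1 := htN
  -- bound the sine part
  have hsum0 : ∑ k, t * (a (sIdx N hN k) - a k) = 0 := by
    rw [← Finset.mul_sum, sum_delta_zero N hN a, mul_zero]
  have hgsum : |∑ k, g k| ≤ (N : ℝ) ^ 4 * t ^ 3 := by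
    have e1 : ∑ k, g k = ∑ k, (g k - t * (a (sIdx N hN k) - a k)) := by
      rw [Finset.sum_sub_distrib, hsum0, sub_zero]
    rw [e1]
    calc |∑ k, (g k - t * (a (sIdx N hN k) - a k))|
        ≤ ∑ k, |g k - t * (a (sIdx N hN k) - a k)| := Finset.abs_sum_le_sum_abs _ _
      _ ≤ ∑ _k : Fin N, (N : ℝ) ^ 3 * t ^ 3 := by
          refine Finset.sum_le_sum fun k _ => ?_
          have h1 := sin_sub_self_bound (htd1 k)
          have h2 : |t * (a (sIdx N hN k) - a k)| ≤ t * N := by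
            rw [abs_mul, abs_of_pos ht]
            exact mul_le_mul_of_nonneg_left (hdabs k) ht.le
          have h3 : |t * (a (sIdx N hN k) - a k)| ^ 3 ≤ (t * N) ^ 3 := by
            exact pow_le_pow_left₀ (abs_nonneg _) h2 3
          calc |g k - t * (a (sIdx N hN k) - a k)|
              ≤ 21 / 96 * |t * (a (sIdx N hN k) - a k)| ^ 3 := h1
            _ ≤ 21 / 96 * (t * N) ^ 3 := by linarith
            _ ≤ (N : ℝ) ^ 3 * t ^ 3 := by nlinarith [pow_nonneg ht.le 3, pow_nonneg hNpos.le 3]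
      _ = (N : ℝ) * ((N : ℝ) ^ 3 * t ^ 3) := by
          rw [Finset.sum_const, Finset.card_univ, Fintype.card_fin, nsmul_eq_mul]
      _ ≤ (N : ℝ) ^ 4 * t ^ 3 := by nlinarith [pow_nonneg ht.le 3]
  -- bound the cosine part
  have hfj : f j ≤ -c * (43 / 96) * (t * ((N : ℝ) - 1)) ^ 2 := by
    rw [hfdef]
    simp only []
    rw [hd j, if_pos rfl]
    have h1 := one_sub_cos_lower (htd1 j)
    rw [hd j, if_pos rfl] at h1
    have : Real.cos (sVar N hN φ θ j) = -c := by rw [hcdef]; ring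
    rw [this]
    nlinarith
  have hfk : ∀ k ∈ Finset.univ.erase j, f k ≤ c * (53 / 96) * t ^ 2 := by
    intro k hk
    have hkj : k ≠ j := Finset.ne_of_mem_erase hk
    rw [hfdef]
    simp only []
    rw [hd k, if_neg hkj]
    have h1 := one_sub_cos_upper (htd1 k)
    rw [hd k, if_neg hkj] at h1
    have h2 := one_sub_cos_lower (htd1 k)
    rw [hd k, if_neg hkj] at h2
    have h3 := hub k
    have h4 : (t * -1) ^ 2 = t ^ 2 := by ring
    rw [h4] at h1 h2
    nlinarith
  have hcard : ((Finset.univ.erase j).card : ℝ) = (N : ℝ) - 1 := by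
    rw [Finset.card_erase_of_mem (Finset.mem_univ j), Finset.card_univ, Fintype.card_fin]
    push_cast [Nat.cast_sub (by omega : 1 ≤ N)]
    ring
  have hfsum : ∑ k, f k ≤ -c * (43 / 96) * (t * ((N : ℝ) - 1)) ^ 2 +
      ((N : ℝ) - 1) * (c * (53 / 96) * t ^ 2) := by
    rw [← Finset.add_sum_erase Finset.univ f (Finset.mem_univ j)]
    have : ∑ k ∈ Finset.univ.erase j, f k ≤ ((N : ℝ) - 1) * (c * (53 / 96) * t ^ 2) := by
      calc ∑ k ∈ Finset.univ.erase j, f k ≤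
          ∑ _k ∈ Finset.univ.erase j, c * (53 / 96) * t ^ 2 := Finset.sum_le_sum hfk
        _ = ((Finset.univ.erase j).card : ℝ) * (c * (53 / 96) * t ^ 2) := by
            rw [Finset.sum_const, nsmul_eq_mul]
        _ = ((N : ℝ) - 1) * (c * (53 / 96) * t ^ 2) := by rw [hcard]
    linarith
  -- combine
  have hm : (2 : ℝ) ≤ (N : ℝ) - 1 := by linarith
  have hA : ∑ k, f k ≤ -(c / 2) * t ^ 2 := by
    have expand : -c * (43 / 96) * (t * ((N : ℝ) - 1)) ^ 2 +
        ((N : ℝ) - 1) * (c * (53 / 96) * t ^ 2) =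
        c * t ^ 2 * (((N : ℝ) - 1) * (53 - 43 * ((N : ℝ) - 1))) / 96 := by ring
    have hmono : ((N : ℝ) - 1) * (53 - 43 * ((N : ℝ) - 1)) ≤ -66 := by nlinarith
    have hP : 0 < c * t ^ 2 := mul_pos hc (pow_pos ht 2)
    have h5 : c * t ^ 2 * (((N : ℝ) - 1) * (53 - 43 * ((N : ℝ) - 1))) ≤ c * t ^ 2 * (-66) :=
      mul_le_mul_of_nonneg_left hmono hP.le
    linarith only [hfsum, expand, h5, hP]
  have hB : S * ∑ k, g k ≤ (N : ℝ) ^ 4 * t ^ 3 := by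
    calc S * ∑ k, g k ≤ |S * ∑ k, g k| := le_abs_self _
      _ = |S| * |∑ k, g k| := abs_mul _ _
      _ ≤ 1 * ((N : ℝ) ^ 4 * t ^ 3) :=
          mul_le_mul hSabs hgsum (abs_nonneg _) zero_le_one
      _ = (N : ℝ) ^ 4 * t ^ 3 := one_mul _
  have hB2 : (N : ℝ) ^ 4 * t ^ 3 ≤ (c / 4) * t ^ 2 := by
    have : (N : ℝ) ^ 4 * t ≤ c / 4 := by
      calc (N : ℝ) ^ 4 * t ≤ (N : ℝ) ^ 4 * (c / (4 * (N : ℝ) ^ 4)) :=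
            mul_le_mul_of_nonneg_left htc hN4.le
        _ = c / 4 := by field_simp
    nlinarith [pow_pos ht 2]
  have hfinal : ∑ k, (f k + S * g k) < 0 := by
    rw [hsplit]
    have : -(c / 2) * t ^ 2 + (c / 4) * t ^ 2 < 0 := by nlinarith [pow_pos ht 2]
    linarith
  have hfinal' : ∑ k : Fin N, (Real.cos (sVar N hN φ θ k) *
      (1 - Real.cos (t * (a (sIdx N hN k) - a k))) +
      S * Real.sin (t * (a (sIdx N hN k) - a k))) < 0 := hfinal
  linarith [hdiffeq, hfinal']
lemma eq_add_int_of_sin_cos (x y : ℝ) (hsin : Real.sin x = Real.sin y)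
    (hcos : Real.cos x = Real.cos y) : ∃ m : ℤ, x = y + 2 * Real.pi * m := by
  have h : Complex.exp (x * Complex.I) = Complex.exp (y * Complex.I) := by
    rw [Complex.exp_mul_I, Complex.exp_mul_I, ← Complex.ofReal_cos, ← Complex.ofReal_cos,
      ← Complex.ofReal_sin, ← Complex.ofReal_sin, hsin, hcos]
  obtain ⟨n, hn⟩ := Complex.exp_eq_exp_iff_exists_int.mp h
  have h3 : (x : ℂ) = (y : ℂ) + (n : ℂ) * (2 * (Real.pi : ℂ)) :=
    mul_right_cancel₀ Complex.I_ne_zero (by rw [hn]; push_cast; ring)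
  have h4 : x = y + (n : ℝ) * (2 * Real.pi) := by exact_mod_cast h3
  exact ⟨n, by rw [h4]; ring⟩


/-- Theorem 1: for odd `N`, a stationary point `θ` (with `θ_N = 0`)
of `F_φ` is a local minimum iff `cos s_k > 0` for all `k = 1, …, N`; equivalently,
iff `q_k = 0` for all `k = 1, …, N-1` (i.e. `s_k ≡ s_N (mod 2π)`) and `cos s_N > 0`. -/
theorem stmt4 (N : ℕ) (hN : 3 ≤ N) (hodd : Odd N) (φ θ : Fin N → ℝ)
    (hlast : θ (lastIdx N (by omega)) = 0)
    (hstat : IsStationaryPt N (by omega) φ θ) :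
    (IsLocalMin (FxyFixed N (by omega) φ) θ ↔
      ∀ k : Fin N, 0 < Real.cos (sVar N (by omega) φ θ k)) ∧
    ((∀ k : Fin N, 0 < Real.cos (sVar N (by omega) φ θ k)) ↔
      ((∀ k : Fin N, (k : ℕ) < N - 1 →
          ∃ m : ℤ, sVar N (by omega) φ θ k =
            sVar N (by omega) φ θ (lastIdx N (by omega)) + 2 * π * m) ∧
        0 < Real.cos (sVar N (by omega) φ θ (lastIdx N (by omega))))) := by
  have hN0 : 0 < N := by omega
  have hsin : ∀ k, Real.sin (sVar N hN0 φ θ k) =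
      Real.sin (sVar N hN0 φ θ (lastIdx N hN0)) := stat_sin N hN0 φ θ hstat
  have hsq : ∀ k, Real.cos (sVar N hN0 φ θ k) ^ 2 =
      Real.cos (sVar N hN0 φ θ (lastIdx N hN0)) ^ 2 := by
    intro k
    have h1 := Real.sin_sq_add_cos_sq (sVar N hN0 φ θ k)
    have h2 := Real.sin_sq_add_cos_sq (sVar N hN0 φ θ (lastIdx N hN0))
    rw [hsin k] at h1
    linarith
  constructor
  · constructor
    · intro hmin
      by_contra hnot
      push_neg at hnot
      obtain ⟨k1, hk1⟩ := hnot
      by_cases hcL : Real.cos (sVar N hN0 φ θ (lastIdx N hN0)) = 0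
      · have hall0 : ∀ k, Real.cos (sVar N hN0 φ θ k) = 0 := by
          intro k
          have h := hsq k
          rw [hcL] at h
          exact (pow_eq_zero_iff two_ne_zero).mp (by rw [h]; norm_num)
        refine absurd hmin (not_localMin_of_curve N hN0 φ θ hlast _ ?_
          (caseA_dec N hN φ θ hstat hall0))
        show (if ((lastIdx N hN0 : ℕ)) = 0 then (2:ℝ)
          else if (lastIdx N hN0 : ℕ) = 1 then 1 else 0) = 0
        rw [if_neg (by show ¬(N - 1 = 0); omega), if_neg (by show ¬(N - 1 = 1); omega)]
      · have hk1ne : Real.cos (sVar N hN0 φ θ k1) ≠ 0 := by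
          intro h0
          apply hcL
          have h := hsq k1
          rw [h0] at h
          refine (pow_eq_zero_iff two_ne_zero).mp ?_
          rw [← h]; norm_num
        have hk1lt : Real.cos (sVar N hN0 φ θ k1) < 0 := lt_of_le_of_ne hk1 hk1ne
        have hub : ∀ k, Real.cos (sVar N hN0 φ θ k) ≤ -Real.cos (sVar N hN0 φ θ k1) := by
          intro k
          have h1 := hsq k
          have h2 := hsq k1
          have h0 : (Real.cos (sVar N hN0 φ θ k) - Real.cos (sVar N hN0 φ θ k1)) *
              (Real.cos (sVar N hN0 φ θ k) + Real.cos (sVar N hN0 φ θ k1)) = 0 := by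
            linear_combination h1 - h2
          rcases mul_eq_zero.mp h0 with h | h
          · linarith
          · linarith
        obtain ⟨a, ha, hdec⟩ := caseB_dec N hN φ θ hstat k1 hk1lt hub
        exact absurd hmin (not_localMin_of_curve N hN0 φ θ hlast a ha hdec)
    · exact isLocalMin_of_cos_pos N hN0 φ θ hlast hstat
  · constructor
    · intro hpos
      refine ⟨fun k _ => ?_, hpos _⟩
      have hc : Real.cos (sVar N hN0 φ θ k) =
          Real.cos (sVar N hN0 φ θ (lastIdx N hN0)) := by
        have h1 := hsq k
        have hp1 := hpos k
        have hp2 := hpos (lastIdx N hN0)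
        nlinarith
      exact eq_add_int_of_sin_cos _ _ (hsin k) hc
    · rintro ⟨hq, hposL⟩ k
      by_cases hk : (k : ℕ) < N - 1
      · obtain ⟨m, hm⟩ := hq k hk
        rw [hm, show sVar N hN0 φ θ (lastIdx N hN0) + 2 * Real.pi * m =
          sVar N hN0 φ θ (lastIdx N hN0) + m * (2 * Real.pi) by ring,
          Real.cos_add_int_mul_two_pi]
        exact hposL
      · have hke : k = lastIdx N hN0 := by
          apply Fin.ext
          have := k.isLt
          show (k : ℕ) = N - 1
          omega
        rw [hke]
        exact hposL
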